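/- For every real c with 0.077 < c < c̄, it holds strictly that BRev(c) < Opt(c). -/

import Mathlib

open MeasureTheory Real Set

/-- Partial derivative of `u` with respect to the first coordinate
(defined via `deriv`; for Lipschitz `u` it exists a.e. by Rademacher). -/
noncomputable def pd1 (u : ℝ × ℝ → ℝ) (x : ℝ × ℝ) : ℝ := deriv (fun t => u (t, x.2)) x.1

/-- Partial derivative of `u` with respect to the second coordinate. -/
noncomputable def pd2 (u : ℝ × ℝ → ℝ) (x : ℝ × ℝ) : ℝ := deriv (fun t => u (x.1, t)) x.2

/-- The square `[c, c+1]²`. -/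
def box (c : ℝ) : Set (ℝ × ℝ) := Icc c (c + 1) ×ˢ Icc c (c + 1)

/-- The revenue of the (relaxed) mechanism induced by utility `u`:
`∫_{[c,c+1]²} (x₁ ∂u/∂x₁ + x₂ ∂u/∂x₂ − u)`. -/
noncomputable def Rev (c : ℝ) (u : ℝ × ℝ → ℝ) : ℝ :=
  ∫ x in box c, (x.1 * pd1 u x + x.2 * pd2 u x - u x)

/-- `Opt(c)`, the optimal value of the convexity-relaxed program for `0 ≤ c ≤ c̄`. -/
noncomputable def Opt (c : ℝ) : ℝ :=
  2 / 27 * ((Real.sqrt 2 - 4) * c ^ 3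
    + 3 * (Real.sqrt (c * (3 * c + 2)) + Real.sqrt 2 + 1) * c ^ 2
    + (2 * Real.sqrt (c * (3 * c + 2)) + 3 * Real.sqrt 2 + 12) * c
    + Real.sqrt 2 + 6)

/-- `BRev(c)`, the best full-bundling revenue. -/
noncomputable def BRev (c : ℝ) : ℝ :=
  2 / 27 * (-4 * c ^ 3 + Real.sqrt 2 * Real.sqrt ((2 * c ^ 2 + 3) ^ 3) + 18 * c)

/-- The critical constant `c̄ = √(15 − 8√2) − 2√2 + 1 ≈ 0.0915`. -/
noncomputable def cbar : ℝ := Real.sqrt (15 - 8 * Real.sqrt 2) - 2 * Real.sqrt 2 + 1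

private lemma aux_sqrt2 (s a b : ℝ) (hs2 : s ^ 2 = 2) (hs0 : 0 < s) (hb : 0 < b)
    (h : a ^ 2 < 2 * b ^ 2) : 0 < a + s * b := by
  rcases le_or_gt 0 a with ha | ha
  · nlinarith [mul_pos hs0 hb]
  · have hsb : (s * b) ^ 2 = 2 * b ^ 2 := by rw [mul_pow, hs2]
    have h1 : (-a) ^ 2 < (s * b) ^ 2 := by rw [hsb]; nlinarith
    have h2 := lt_of_pow_lt_pow_left₀ 2 (le_of_lt (mul_pos hs0 hb)) h1
    linarith

set_option maxHeartbeats 2000000 in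
/-- For every `c` with `0.077 < c < c̄`, strictly `BRev(c) < Opt(c)`. -/
theorem bundling_strictly_below_relaxed_opt (c : ℝ) (h1 : 0.077 < c) (h2 : c < cbar) :
    BRev c < Opt c := by
  unfold cbar at h2
  unfold BRev Opt
  set s : ℝ := Real.sqrt 2 with hs_def
  have hs0 : 0 < s := by rw [hs_def]; positivity
  have hs2 : s ^ 2 = 2 := Real.sq_sqrt (by norm_num)
  have hslo : 1.414 < s := by nlinarith only [hs2, hs0]
  have hshi : s < 1.4143 := by linarith only [hs2, sq_nonneg (s - 1.4143)]
  have hc0 : (0:ℝ) < c := by linarith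
  set p : ℝ := Real.sqrt (c * (3 * c + 2)) with hp_def
  set q : ℝ := Real.sqrt (2 * c ^ 2 + 3) with hq_def
  have hcc : 0 < c * (3 * c + 2) := by nlinarith only [hc0, mul_pos hc0 hc0]
  have hp2 : p ^ 2 = c * (3 * c + 2) := Real.sq_sqrt (le_of_lt hcc)
  have hp0 : 0 < p := Real.sqrt_pos.mpr hcc
  have hq2 : q ^ 2 = 2 * c ^ 2 + 3 := Real.sq_sqrt (by positivity)
  have hq0 : 0 < q := Real.sqrt_pos.mpr (by positivity)
  have hq3 : Real.sqrt ((2 * c ^ 2 + 3) ^ 3) = (2 * c ^ 2 + 3) * q := by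
    rw [show ((2 * c ^ 2 + 3 : ℝ)) ^ 3 = (2 * c ^ 2 + 3) ^ 2 * (2 * c ^ 2 + 3) by ring,
      Real.sqrt_mul (by positivity), Real.sqrt_sq (by positivity), hq_def]
  -- upper bound on c
  have hsqrt15 : Real.sqrt (15 - 8 * s) < 2 * s - 0.9 := by
    rw [Real.sqrt_lt' (by linarith only [hslo])]
    linarith only [hs2, hslo]
  have hc1 : c < 0.1 := by linarith only [h2, hsqrt15]
  -- quartic inequality encoding c < cbar
  have hsq : (c + 2 * s - 1) ^ 2 < 15 - 8 * s :=
    (Real.lt_sqrt (by linarith only [hc0, hslo] : (0:ℝ) ≤ c + 2 * s - 1)).mp (by linarith only [h2])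
  have hMlin : 4 * s * (c + 1) < 6 + 2 * c - c ^ 2 := by linarith only [hsq, hs2]
  have hu0 : 0 < 4 * s * (c + 1) := by
    have h' := mul_pos hs0 (show (0:ℝ) < c + 1 by linarith only [hc0])
    linarith only [h']
  have ht : s ^ 2 * (c + 1) ^ 2 = 2 * (c + 1) ^ 2 := by rw [hs2]
  have hM : 0 < (c^4 - 4*c^3 - 40*c^2 - 40*c + 4) := by
    linarith only [mul_self_lt_mul_self (le_of_lt hu0) hMlin, ht]
  -- powers of c bounds
  have hub : c ≤ 0.1 := le_of_lt hc1
  have hc0' : (0:ℝ) ≤ c := le_of_lt hc0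
  have h8 : c ^ 8 ≤ (0.1:ℝ) ^ 8 := pow_le_pow_left₀ hc0' hub 8
  have h9 : c ^ 9 ≤ (0.1:ℝ) ^ 9 := pow_le_pow_left₀ hc0' hub 9
  have h10 : c ^ 10 ≤ (0.1:ℝ) ^ 10 := pow_le_pow_left₀ hc0' hub 10
  have h11 : c ^ 11 ≤ (0.1:ℝ) ^ 11 := pow_le_pow_left₀ hc0' hub 11
  have h12 : c ^ 12 ≤ (0.1:ℝ) ^ 12 := pow_le_pow_left₀ hc0' hub 12
  have h13 : c ^ 13 ≤ (0.1:ℝ) ^ 13 := pow_le_pow_left₀ hc0' hub 13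
  have h14 : c ^ 14 ≤ (0.1:ℝ) ^ 14 := pow_le_pow_left₀ hc0' hub 14
  have h15 : c ^ 15 ≤ (0.1:ℝ) ^ 15 := pow_le_pow_left₀ hc0' hub 15
  have h16 : c ^ 16 ≤ (0.1:ℝ) ^ 16 := pow_le_pow_left₀ hc0' hub 16
  have hK : 0 < (-2209*c^16 - 18800*c^15 - 50876*c^14 - 102808*c^13 - 145334*c^12 - 149656*c^11 - 133092*c^10 - 76584*c^9 - 26929*c^8 + 13896*c^7 + 58392*c^6 + 57536*c^5 + 44032*c^4 + 33344*c^3 + 13504*c^2 + 1792*c - 64) := by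
    linarith only [h8, h9, h10, h11, h12, h13, h14, h15, h16, h1, le_of_lt (pow_pos hc0 2),
      le_of_lt (pow_pos hc0 3), le_of_lt (pow_pos hc0 4), le_of_lt (pow_pos hc0 5),
      le_of_lt (pow_pos hc0 6), le_of_lt (pow_pos hc0 7)]
  have heqG : 2 * (492*c^11 + 996*c^10 + 840*c^9 + 864*c^8 + 1764*c^7 + 4572*c^6 + 5208*c^5 + 1392*c^4 + 912*c^3 + 3216*c^2 + 2208*c + 384) ^ 2 - (47*c^12 + 12*c^11 + 2586*c^10 + 9796*c^9 + 16515*c^8 + 19656*c^7 + 13396*c^6 + 4728*c^5 + 5268*c^4 + 592*c^3 - 5232*c^2 - 3072*c - 544) ^ 2 = (c^4 - 4*c^3 - 40*c^2 - 40*c + 4) ^ 2 * (-2209*c^16 - 18800*c^15 - 50876*c^14 - 102808*c^13 - 145334*c^12 - 149656*c^11 - 133092*c^10 - 76584*c^9 - 26929*c^8 + 13896*c^7 + 58392*c^6 + 57536*c^5 + 44032*c^4 + 33344*c^3 + 13504*c^2 + 1792*c - 64) := by ring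
  have hG : (47*c^12 + 12*c^11 + 2586*c^10 + 9796*c^9 + 16515*c^8 + 19656*c^7 + 13396*c^6 + 4728*c^5 + 5268*c^4 + 592*c^3 - 5232*c^2 - 3072*c - 544) ^ 2 < 2 * (492*c^11 + 996*c^10 + 840*c^9 + 864*c^8 + 1764*c^7 + 4572*c^6 + 5208*c^5 + 1392*c^4 + 912*c^3 + 3216*c^2 + 2208*c + 384) ^ 2 := by
    have hpos : 0 < 2 * (492*c^11 + 996*c^10 + 840*c^9 + 864*c^8 + 1764*c^7 + 4572*c^6 + 5208*c^5 + 1392*c^4 + 912*c^3 + 3216*c^2 + 2208*c + 384) ^ 2 - (47*c^12 + 12*c^11 + 2586*c^10 + 9796*c^9 + 16515*c^8 + 19656*c^7 + 13396*c^6 + 4728*c^5 + 5268*c^4 + 592*c^3 - 5232*c^2 - 3072*c - 544) ^ 2 := by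
      rw [heqG]; exact mul_pos (pow_pos hM 2) hK
    exact sub_pos.mp hpos
  clear heqG hK h8 h9 h10 h11 h12 h13 h14 h15 h16
  have hE1 : 0 < (492*c^11 + 996*c^10 + 840*c^9 + 864*c^8 + 1764*c^7 + 4572*c^6 + 5208*c^5 + 1392*c^4 + 912*c^3 + 3216*c^2 + 2208*c + 384) := by positivity
  have hE : 0 < (47*c^12 + 12*c^11 + 2586*c^10 + 9796*c^9 + 16515*c^8 + 19656*c^7 + 13396*c^6 + 4728*c^5 + 5268*c^4 + 592*c^3 - 5232*c^2 - 3072*c - 544) + s * (492*c^11 + 996*c^10 + 840*c^9 + 864*c^8 + 1764*c^7 + 4572*c^6 + 5208*c^5 + 1392*c^4 + 912*c^3 + 3216*c^2 + 2208*c + 384) :=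
    aux_sqrt2 s (47*c^12 + 12*c^11 + 2586*c^10 + 9796*c^9 + 16515*c^8 + 19656*c^7 + 13396*c^6 + 4728*c^5 + 5268*c^4 + 592*c^3 - 5232*c^2 - 3072*c - 544) (492*c^11 + 996*c^10 + 840*c^9 + 864*c^8 + 1764*c^7 + 4572*c^6 + 5208*c^5 + 1392*c^4 + 912*c^3 + 3216*c^2 + 2208*c + 384) hs2 hs0 hE1 hG
  clear hG hE1
  have heqE : 4 * (s*c^3 + 3*(s+1)*c^2 + (3*s-6)*c + s + 6) ^ 2 * (c * (3 * c + 2)) ^ 3 - (2*(2*c^2+3)^3 - (c*(3*c+2))^3 - (s*c^3 + 3*(s+1)*c^2 + (3*s-6)*c + s + 6)^2) ^ 2 = (47*c^12 + 12*c^11 + 2586*c^10 + 9796*c^9 + 16515*c^8 + 19656*c^7 + 13396*c^6 + 4728*c^5 + 5268*c^4 + 592*c^3 - 5232*c^2 - 3072*c - 544) + s * (492*c^11 + 996*c^10 + 840*c^9 + 864*c^8 + 1764*c^7 + 4572*c^6 + 5208*c^5 + 1392*c^4 + 912*c^3 + 3216*c^2 + 2208*c + 384) := by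
    linear_combination (-1*c^12*s^2 + 84*c^12 - 12*c^11*s^2 - 12*c^11*s + 600*c^11 - 66*c^10*s^2 - 84*c^10*s + 1968*c^10 - 220*c^9*s^2 - 240*c^9*s + 4104*c^9 - 495*c^8*s^2 - 360*c^8*s + 6066*c^8 - 792*c^7*s^2 - 360*c^7*s + 6408*c^7 - 924*c^6*s^2 - 504*c^6*s + 5200*c^6 - 792*c^5*s^2 - 1008*c^5*s + 4488*c^5 - 495*c^4*s^2 - 1440*c^4*s + 4344*c^4 - 220*c^3*s^2 - 1260*c^3*s + 2816*c^3 - 66*c^2*s^2 - 660*c^2*s + 624*c^2 - 12*c*s^2 - 192*c*s - 240*c - 1*s^2 - 24*s - 110) * hs2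
  have heqB : (2*(2*c^2+3)^3 - (c*(3*c+2))^3 - (s*c^3 + 3*(s+1)*c^2 + (3*s-6)*c + s + 6)^2) = (-13*c^6 - 66*c^5 - 3*c^4 - 12*c^3 + 6*c^2 + 60*c + 16) + s * (-6*c^5 - 6*c^4 + 6*c^3 - 6*c^2 - 24*c - 12) := by
    linear_combination (-1*c^6 - 6*c^5 - 15*c^4 - 20*c^3 - 15*c^2 - 6*c - 1) * hs2
  have h2b : c ^ 2 ≤ (0.1:ℝ) ^ 2 := pow_le_pow_left₀ hc0' hub 2
  have h3b : c ^ 3 ≤ (0.1:ℝ) ^ 3 := pow_le_pow_left₀ hc0' hub 3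
  have h4b : c ^ 4 ≤ (0.1:ℝ) ^ 4 := pow_le_pow_left₀ hc0' hub 4
  have h5b : c ^ 5 ≤ (0.1:ℝ) ^ 5 := pow_le_pow_left₀ hc0' hub 5
  have h6b : c ^ 6 ≤ (0.1:ℝ) ^ 6 := pow_le_pow_left₀ hc0' hub 6
  have hB1 : (-6*c^5 - 6*c^4 + 6*c^3 - 6*c^2 - 24*c - 12) < 0 := by
    linarith only [pow_pos hc0 5, pow_pos hc0 4, pow_pos hc0 2, h3b, hc0]
  have hsB1 : 1.4143 * (-6*c^5 - 6*c^4 + 6*c^3 - 6*c^2 - 24*c - 12) < s * (-6*c^5 - 6*c^4 + 6*c^3 - 6*c^2 - 24*c - 12) := by nlinarith only [hB1, hshi]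
  have hB : 0 < (2*(2*c^2+3)^3 - (c*(3*c+2))^3 - (s*c^3 + 3*(s+1)*c^2 + (3*s-6)*c + s + 6)^2) := by
    rw [heqB]
    linarith only [hsB1, h1, hc1, h2b, h3b, h4b, h5b, h6b, sq_nonneg c]
  have hApos : 0 < (s*c^3 + 3*(s+1)*c^2 + (3*s-6)*c + s + 6) := by
    linarith only [hslo, hc0, hc1, mul_pos hs0 (pow_pos hc0 3),
      mul_pos hs0 (pow_pos hc0 2), pow_pos hc0 2, mul_pos hs0 hc0]
  have hkey : (2*(2*c^2+3)^3 - (c*(3*c+2))^3 - (s*c^3 + 3*(s+1)*c^2 + (3*s-6)*c + s + 6)^2) ^ 2 < 4 * (s*c^3 + 3*(s+1)*c^2 + (3*s-6)*c + s + 6) ^ 2 * (c * (3 * c + 2)) ^ 3 := by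
    have hpos : 0 < 4 * (s*c^3 + 3*(s+1)*c^2 + (3*s-6)*c + s + 6) ^ 2 * (c * (3 * c + 2)) ^ 3 - (2*(2*c^2+3)^3 - (c*(3*c+2))^3 - (s*c^3 + 3*(s+1)*c^2 + (3*s-6)*c + s + 6)^2) ^ 2 := by
      rw [heqE]; exact hE
    exact sub_pos.mp hpos
  clear heqE hE hB1 hsB1 heqB
  have hx0 : 0 < 2 * (s*c^3 + 3*(s+1)*c^2 + (3*s-6)*c + s + 6) * (c * (3 * c + 2)) * p :=
    mul_pos (mul_pos (mul_pos (by norm_num : (0:ℝ) < 2) hApos) hcc) hp0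
  have hx2 : (2 * (s*c^3 + 3*(s+1)*c^2 + (3*s-6)*c + s + 6) * (c * (3 * c + 2)) * p) ^ 2 = 4 * (s*c^3 + 3*(s+1)*c^2 + (3*s-6)*c + s + 6) ^ 2 * (c * (3 * c + 2)) ^ 3 := by
    linear_combination (4 * (s*c^3 + 3*(s+1)*c^2 + (3*s-6)*c + s + 6) ^ 2 * (c * (3 * c + 2)) ^ 2) * hp2
  have hstep1 : (2*(2*c^2+3)^3 - (c*(3*c+2))^3 - (s*c^3 + 3*(s+1)*c^2 + (3*s-6)*c + s + 6)^2) < 2 * (s*c^3 + 3*(s+1)*c^2 + (3*s-6)*c + s + 6) * (c * (3 * c + 2)) * p :=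
    lt_of_pow_lt_pow_left₀ 2 (le_of_lt hx0) (by rw [hx2]; exact hkey)
  clear hkey hx2 hx0 hB
  have hy2 : (s * (2 * c ^ 2 + 3) * q) ^ 2 = 2 * (2 * c ^ 2 + 3) ^ 3 := by
    linear_combination ((2 * c ^ 2 + 3) ^ 2 * q ^ 2) * hs2 + (2 * (2 * c ^ 2 + 3) ^ 2) * hq2
  have hz2 : ((s*c^3 + 3*(s+1)*c^2 + (3*s-6)*c + s + 6) + (c * (3 * c + 2)) * p) ^ 2
      = (s*c^3 + 3*(s+1)*c^2 + (3*s-6)*c + s + 6) ^ 2 + 2 * (s*c^3 + 3*(s+1)*c^2 + (3*s-6)*c + s + 6) * (c * (3 * c + 2)) * p + (c * (3 * c + 2)) ^ 3 := by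
    linear_combination ((c * (3 * c + 2)) ^ 2) * hp2
  have hrhs0 : 0 ≤ (s*c^3 + 3*(s+1)*c^2 + (3*s-6)*c + s + 6) + (c * (3 * c + 2)) * p := by
    linarith only [hApos, mul_pos hcc hp0]
  have hstep2 : s * (2 * c ^ 2 + 3) * q < (s*c^3 + 3*(s+1)*c^2 + (3*s-6)*c + s + 6) + (c * (3 * c + 2)) * p := by
    apply lt_of_pow_lt_pow_left₀ 2 hrhs0
    rw [hy2, hz2]
    calc 2 * (2 * c ^ 2 + 3) ^ 3
        = ((c * (3 * c + 2)) ^ 3 + (s*c^3 + 3*(s+1)*c^2 + (3*s-6)*c + s + 6) ^ 2) + (2*(2*c^2+3)^3 - (c*(3*c+2))^3 - (s*c^3 + 3*(s+1)*c^2 + (3*s-6)*c + s + 6)^2) := by ring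
      _ < ((c * (3 * c + 2)) ^ 3 + (s*c^3 + 3*(s+1)*c^2 + (3*s-6)*c + s + 6) ^ 2) + 2 * (s*c^3 + 3*(s+1)*c^2 + (3*s-6)*c + s + 6) * (c * (3 * c + 2)) * p :=
          add_lt_add_right hstep1 _
      _ = (s*c^3 + 3*(s+1)*c^2 + (3*s-6)*c + s + 6) ^ 2 + 2 * (s*c^3 + 3*(s+1)*c^2 + (3*s-6)*c + s + 6) * (c * (3 * c + 2)) * p + (c * (3 * c + 2)) ^ 3 := by ring
  rw [hq3]
  linarith only [hstep2]
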